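/- Theorem 2 (algebraic core: the time-averaged energy dissipation of an eddy viscosity model is controlled by the averaged turbulent viscosity): Let F, U, L, ν, C > 0 and 0 < β < 1, and set Re = LU/ν. Let e, y, n : (0,∞) → ℝ be nonnegative bounded functions with limsup_{T→∞} y(T) = U² and N := limsup_{T→∞} n(T) < ∞. Assume that for every T > 0: (i) e(T) ≤ C/T + F·√(y(T)); and (ii) F² ≤ C/T + (F/L)·y(T) + (β/2)(F/U)·e(T) + (1/β)·U F ν/L² + (1/(2β))·(U F/L²)·n(T). Then limsup_{T→∞} e(T) ≤ ( 2/(2−β) + (2/(β(2−β)))·Re^{-1} + (1/(β(2−β)))·N/(LU) ) · U³/L. -/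

import Mathlib

set_option maxHeartbeats 1000000


open Filter

/-- Theorem 2 (algebraic core): the time-averaged energy dissipation of an eddy
viscosity model is controlled by the averaged turbulent viscosity.  Here
`e T = ⟨ε₀ + ε_turb⟩_T`, `y T = ⟨(1/|Ω|)‖u‖²⟩_T` with `limsup y = U²`, and
`n T = ⟨(1/|Ω|)∫_Ω ν_turb⟩_T` with `N = limsup n = avg(ν_turb)`. From
(i) `e T ≤ C/T + F√(y T)` and
(ii) `F² ≤ C/T + (F/L) y T + (β/2)(F/U) e T + (1/β)UFν/L² + (1/(2β))(UF/L²) n T`,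
one has `limsup e ≤ (2/(2−β) + (2/(β(2−β))) Re⁻¹ + (1/(β(2−β))) N/(LU)) U³/L`. -/
theorem eddy_viscosity_dissipation_bound
    (F U L ν C β Re N : ℝ)
    (hF : 0 < F) (hU : 0 < U) (hL : 0 < L) (hν : 0 < ν) (hC : 0 < C)
    (hβ0 : 0 < β) (hβ1 : β < 1) (hRe : Re = L * U / ν)
    (e y n : ℝ → ℝ)
    (he0 : ∀ T, 0 ≤ e T) (hy0 : ∀ T, 0 ≤ y T) (hn0 : ∀ T, 0 ≤ n T)
    (heb : ∃ M, ∀ T, e T ≤ M) (hyb : ∃ M, ∀ T, y T ≤ M) (hnb : ∃ M, ∀ T, n T ≤ M)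
    (hy : Filter.limsup y Filter.atTop = U ^ 2)
    (hN : N = Filter.limsup n Filter.atTop)
    (hi : ∀ T : ℝ, 0 < T → e T ≤ C / T + F * Real.sqrt (y T))
    (hii : ∀ T : ℝ, 0 < T →
      F ^ 2 ≤ C / T + (F / L) * y T + (β / 2) * (F / U) * e T +
        (1 / β) * (U * F * ν / L ^ 2) + (1 / (2 * β)) * (U * F / L ^ 2) * n T) :
    Filter.limsup e Filter.atTop ≤
      (2 / (2 - β) + (2 / (β * (2 - β))) * Re⁻¹ +
        (1 / (β * (2 - β))) * (N / (L * U))) * (U ^ 3 / L) := by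
  set E := Filter.limsup e Filter.atTop with hE
  -- boundedness facts
  have hbe : Filter.IsBoundedUnder (· ≤ ·) Filter.atTop e := isBoundedUnder_of heb
  have hby : Filter.IsBoundedUnder (· ≤ ·) Filter.atTop y := isBoundedUnder_of hyb
  have hbn : Filter.IsBoundedUnder (· ≤ ·) Filter.atTop n := isBoundedUnder_of hnb
  have hce : Filter.IsCoboundedUnder (· ≤ ·) Filter.atTop e :=
    isCoboundedUnder_le_of_le Filter.atTop he0
  have hcn : Filter.IsCoboundedUnder (· ≤ ·) Filter.atTop n :=
    isCoboundedUnder_le_of_le Filter.atTop hn0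
  have hE0 : 0 ≤ E :=
    le_limsup_of_frequently_le (Frequently.of_forall he0) hbe
  have hN0 : 0 ≤ N := by
    rw [hN]
    exact le_limsup_of_frequently_le (Frequently.of_forall hn0) hbn
  -- Main ε-claim
  have key : ∀ ε : ℝ, 0 < ε → E ≤ ε + Real.sqrt (U ^ 2 + ε) *
      (ε / F + (U ^ 2 + ε) / L + (β / 2) * (E + ε) / U +
        (1 / β) * (U * ν / L ^ 2) + (1 / (2 * β)) * (U / L ^ 2) * (N + ε)) := by
    intro ε hε
    have hev1 : ∀ᶠ T in Filter.atTop, y T < U ^ 2 + ε :=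
      eventually_lt_of_limsup_lt (by rw [hy]; linarith) hby
    have hev2 : ∀ᶠ T in Filter.atTop, n T < N + ε :=
      eventually_lt_of_limsup_lt (by rw [hN]; linarith) hbn
    have hev3 : ∀ᶠ T in Filter.atTop, e T < E + ε :=
      eventually_lt_of_limsup_lt (by rw [hE]; linarith) hbe
    have hev4 : ∀ᶠ T : ℝ in Filter.atTop, C / T ≤ ε ∧ 0 < T := by
      filter_upwards [eventually_ge_atTop (max (C / ε) 1)] with T hT
      have hT1 : (1 : ℝ) ≤ T := le_trans (le_max_right _ _) hT
      have hT0 : 0 < T := lt_of_lt_of_le one_pos hT1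
      refine ⟨?_, hT0⟩
      rw [div_le_iff₀ hT0]
      have : C / ε ≤ T := le_trans (le_max_left _ _) hT
      calc C = ε * (C / ε) := by field_simp
        _ ≤ ε * T := by nlinarith [(div_nonneg hC.le hε.le)]
    -- get one T where the F-bound holds
    obtain ⟨T, hy1, hn1, he1, hCT, hT0⟩ :=
      (hev1.and (hev2.and (hev3.and hev4))).exists
    -- bound on F
    have hFb : F ≤ ε / F + (U ^ 2 + ε) / L + (β / 2) * (E + ε) / U +
        (1 / β) * (U * ν / L ^ 2) + (1 / (2 * β)) * (U / L ^ 2) * (N + ε) := by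
      have h2 := hii T hT0
      have hF2 : F ^ 2 ≤ ε + (F / L) * (U ^ 2 + ε) + (β / 2) * (F / U) * (E + ε) +
          (1 / β) * (U * F * ν / L ^ 2) + (1 / (2 * β)) * (U * F / L ^ 2) * (N + ε) := by
        have c1 : (F / L) * y T ≤ (F / L) * (U ^ 2 + ε) := by
          apply mul_le_mul_of_nonneg_left hy1.le (by positivity)
        have c2 : (β / 2) * (F / U) * e T ≤ (β / 2) * (F / U) * (E + ε) := by
          apply mul_le_mul_of_nonneg_left he1.le (by positivity)
        have c3 : (1 / (2 * β)) * (U * F / L ^ 2) * n T ≤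
            (1 / (2 * β)) * (U * F / L ^ 2) * (N + ε) := by
          apply mul_le_mul_of_nonneg_left hn1.le (by positivity)
        linarith
      -- divide by F
      rw [← mul_le_mul_iff_right₀ hF]
      calc F * F = F ^ 2 := (sq F).symm
        _ ≤ ε + (F / L) * (U ^ 2 + ε) + (β / 2) * (F / U) * (E + ε) +
            (1 / β) * (U * F * ν / L ^ 2) + (1 / (2 * β)) * (U * F / L ^ 2) * (N + ε) := hF2
        _ = F * (ε / F + (U ^ 2 + ε) / L + (β / 2) * (E + ε) / U +
            (1 / β) * (U * ν / L ^ 2) + (1 / (2 * β)) * (U / L ^ 2) * (N + ε)) := by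
          field_simp
    -- eventual bound on e
    have hev5 : ∀ᶠ T in Filter.atTop, e T ≤ ε + Real.sqrt (U ^ 2 + ε) *
        (ε / F + (U ^ 2 + ε) / L + (β / 2) * (E + ε) / U +
          (1 / β) * (U * ν / L ^ 2) + (1 / (2 * β)) * (U / L ^ 2) * (N + ε)) := by
      filter_upwards [hev1, hev4] with S hyS hS4
      have h1 := hi S hS4.2
      have hsq : Real.sqrt (y S) ≤ Real.sqrt (U ^ 2 + ε) := Real.sqrt_le_sqrt hyS.le
      have h3 : F * Real.sqrt (y S) ≤ Real.sqrt (U ^ 2 + ε) *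
          (ε / F + (U ^ 2 + ε) / L + (β / 2) * (E + ε) / U +
            (1 / β) * (U * ν / L ^ 2) + (1 / (2 * β)) * (U / L ^ 2) * (N + ε)) := by
        calc F * Real.sqrt (y S) ≤ F * Real.sqrt (U ^ 2 + ε) :=
              mul_le_mul_of_nonneg_left hsq hF.le
          _ ≤ (ε / F + (U ^ 2 + ε) / L + (β / 2) * (E + ε) / U +
              (1 / β) * (U * ν / L ^ 2) + (1 / (2 * β)) * (U / L ^ 2) * (N + ε)) *
              Real.sqrt (U ^ 2 + ε) :=
              mul_le_mul_of_nonneg_right hFb (Real.sqrt_nonneg _)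
          _ = _ := mul_comm _ _
      linarith [hS4.1]
    exact limsup_le_of_le hce hev5
  -- take the limit ε → 0⁺
  have hlim : E ≤ U * (U ^ 2 / L + (β / 2) * E / U +
      (1 / β) * (U * ν / L ^ 2) + (1 / (2 * β)) * (U / L ^ 2) * N) := by
    have hcont : Filter.Tendsto (fun ε : ℝ => ε + Real.sqrt (U ^ 2 + ε) *
        (ε / F + (U ^ 2 + ε) / L + (β / 2) * (E + ε) / U +
          (1 / β) * (U * ν / L ^ 2) + (1 / (2 * β)) * (U / L ^ 2) * (N + ε)))
        (nhdsWithin 0 (Set.Ioi 0))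
        (nhds (U * (U ^ 2 / L + (β / 2) * E / U +
          (1 / β) * (U * ν / L ^ 2) + (1 / (2 * β)) * (U / L ^ 2) * N))) := by
      have hc : ContinuousAt (fun ε : ℝ => ε + Real.sqrt (U ^ 2 + ε) *
          (ε / F + (U ^ 2 + ε) / L + (β / 2) * (E + ε) / U +
            (1 / β) * (U * ν / L ^ 2) + (1 / (2 * β)) * (U / L ^ 2) * (N + ε))) 0 := by
        fun_prop
      have h0 : (fun ε : ℝ => ε + Real.sqrt (U ^ 2 + ε) *
          (ε / F + (U ^ 2 + ε) / L + (β / 2) * (E + ε) / U +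
            (1 / β) * (U * ν / L ^ 2) + (1 / (2 * β)) * (U / L ^ 2) * (N + ε))) 0 =
          U * (U ^ 2 / L + (β / 2) * E / U +
            (1 / β) * (U * ν / L ^ 2) + (1 / (2 * β)) * (U / L ^ 2) * N) := by
        simp [Real.sqrt_sq hU.le]
      rw [← h0]
      exact hc.continuousWithinAt.tendsto
    refine ge_of_tendsto hcont ?_
    filter_upwards [self_mem_nhdsWithin] with ε hε
    exact key ε hε
  -- final algebra
  have h2β : 0 < 2 - β := by linarith
  have hstep : E ≤ U ^ 3 / L + (β / 2) * E + (1 / β) * (U ^ 2 * ν / L ^ 2) +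
      (1 / (2 * β)) * (U ^ 2 / L ^ 2) * N := by
    have := hlim
    have hexp : U * (U ^ 2 / L + (β / 2) * E / U +
        (1 / β) * (U * ν / L ^ 2) + (1 / (2 * β)) * (U / L ^ 2) * N) =
        U ^ 3 / L + (β / 2) * E + (1 / β) * (U ^ 2 * ν / L ^ 2) +
        (1 / (2 * β)) * (U ^ 2 / L ^ 2) * N := by
      field_simp
    linarith [hexp ▸ this]
  have hfinal : E ≤ 2 / (2 - β) * (U ^ 3 / L + (1 / β) * (U ^ 2 * ν / L ^ 2) +
      (1 / (2 * β)) * (U ^ 2 / L ^ 2) * N) := by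
    rw [div_mul_eq_mul_div, le_div_iff₀ h2β]
    nlinarith [hstep]
  calc E ≤ _ := hfinal
    _ = (2 / (2 - β) + (2 / (β * (2 - β))) * Re⁻¹ +
        (1 / (β * (2 - β))) * (N / (L * U))) * (U ^ 3 / L) := by
      rw [hRe, inv_div]
      have h1 : β ≠ 0 := hβ0.ne'
      have h2 : (2 - β) ≠ 0 := h2β.ne'
      field_simp
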